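/- The function g(x) := 1/(cos(x^{-1/2}) − 1) is concave on the interval (π^{-2}, ∞). -/

import Mathlib

open Real

/-- On `[0, π]`, `sin t - t * cos t ≥ 0`. -/
lemma aux1 (t : ℝ) (h0 : 0 ≤ t) (hπ : t ≤ π) : 0 ≤ Real.sin t - t * Real.cos t := by
  have hder : ∀ s : ℝ, HasDerivAt (fun u : ℝ => Real.sin u - u * Real.cos u)
      (s * Real.sin s) s := by
    intro s
    have h := (Real.hasDerivAt_sin s).sub ((hasDerivAt_id s).mul (Real.hasDerivAt_cos s))
    refine h.congr_deriv ?_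
    simp only [id_eq]
    ring
  have hmono : MonotoneOn (fun u : ℝ => Real.sin u - u * Real.cos u) (Set.Icc 0 π) := by
    apply monotoneOn_of_deriv_nonneg (convex_Icc 0 π)
    · exact fun s _ => ((hder s).continuousAt).continuousWithinAt
    · exact fun s _ => ((hder s).differentiableAt).differentiableWithinAt
    · intro s hs
      rw [interior_Icc] at hs
      rw [(hder s).deriv]
      exact mul_nonneg hs.1.le (Real.sin_nonneg_of_nonneg_of_le_pi hs.1.le hs.2.le)
  have := hmono (Set.mem_Icc.mpr ⟨le_refl 0, Real.pi_pos.le⟩) (Set.mem_Icc.mpr ⟨h0, hπ⟩) h0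
  simpa using this

/-- On `[0, π]`, `2 - 2 cos t - t sin t ≥ 0`. -/
lemma aux2 (t : ℝ) (h0 : 0 ≤ t) (hπ : t ≤ π) : 0 ≤ 2 - 2 * Real.cos t - t * Real.sin t := by
  have hder : ∀ s : ℝ, HasDerivAt (fun u : ℝ => 2 - 2 * Real.cos u - u * Real.sin u)
      (Real.sin s - s * Real.cos s) s := by
    intro s
    have h := (((Real.hasDerivAt_cos s).const_mul (2:ℝ)).const_sub 2).sub
      ((hasDerivAt_id s).mul (Real.hasDerivAt_sin s))
    refine h.congr_deriv ?_
    simp only [id_eq]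
    ring
  have hmono : MonotoneOn (fun u : ℝ => 2 - 2 * Real.cos u - u * Real.sin u) (Set.Icc 0 π) := by
    apply monotoneOn_of_deriv_nonneg (convex_Icc 0 π)
    · exact fun s _ => ((hder s).continuousAt).continuousWithinAt
    · exact fun s _ => ((hder s).differentiableAt).differentiableWithinAt
    · intro s hs
      rw [interior_Icc] at hs
      rw [(hder s).deriv]
      have := aux1 s hs.1.le hs.2.le
      linarith
  have := hmono (Set.mem_Icc.mpr ⟨le_refl 0, Real.pi_pos.le⟩) (Set.mem_Icc.mpr ⟨h0, hπ⟩) h0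
  simpa using this

/-- On `[0, π]`, `3 sin t ≤ t cos t + 2 t`. -/
lemma aux3 (t : ℝ) (h0 : 0 ≤ t) (hπ : t ≤ π) : 3 * Real.sin t ≤ t * Real.cos t + 2 * t := by
  have hder : ∀ s : ℝ, HasDerivAt (fun u : ℝ => u * Real.cos u + 2 * u - 3 * Real.sin u)
      (2 - 2 * Real.cos s - s * Real.sin s) s := by
    intro s
    have h := (((hasDerivAt_id s).mul (Real.hasDerivAt_cos s)).add
      ((hasDerivAt_id s).const_mul (2:ℝ))).sub ((Real.hasDerivAt_sin s).const_mul (3:ℝ))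
    refine h.congr_deriv ?_
    simp only [id_eq]
    ring
  have hmono : MonotoneOn (fun u : ℝ => u * Real.cos u + 2 * u - 3 * Real.sin u)
      (Set.Icc 0 π) := by
    apply monotoneOn_of_deriv_nonneg (convex_Icc 0 π)
    · exact fun s _ => ((hder s).continuousAt).continuousWithinAt
    · exact fun s _ => ((hder s).differentiableAt).differentiableWithinAt
    · intro s hs
      rw [interior_Icc] at hs
      rw [(hder s).deriv]
      exact aux2 s hs.1.le hs.2.le
  have := hmono (Set.mem_Icc.mpr ⟨le_refl 0, Real.pi_pos.le⟩) (Set.mem_Icc.mpr ⟨h0, hπ⟩) h0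
  simp only [Real.cos_zero, Real.sin_zero] at this
  linarith

/-- derivative of `x ^ (-1/2)` -/
lemma hu_deriv {x : ℝ} (hx0 : 0 < x) :
    HasDerivAt (fun y : ℝ => y ^ (-(1:ℝ) / 2)) (-(1:ℝ)/2 * x ^ (-(3:ℝ)/2)) x := by
  have h := Real.hasDerivAt_rpow_const (x := x) (p := -(1:ℝ)/2) (Or.inl hx0.ne')
  rwa [show -(1:ℝ)/2 - 1 = -(3:ℝ)/2 by norm_num] at h

lemma hA_deriv {x : ℝ} (hx0 : 0 < x) :
    HasDerivAt (fun y : ℝ => y ^ (-(3:ℝ) / 2)) (-(3:ℝ)/2 * x ^ (-(5:ℝ)/2)) x := by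
  have h := Real.hasDerivAt_rpow_const (x := x) (p := -(3:ℝ)/2) (Or.inl hx0.ne')
  rwa [show -(3:ℝ)/2 - 1 = -(5:ℝ)/2 by norm_num] at h

lemma h3pow {x : ℝ} (hx0 : 0 < x) : x ^ (-(3:ℝ)/2) = (x ^ (-(1:ℝ)/2)) ^ (3:ℕ) := by
  rw [← Real.rpow_natCast (x ^ (-(1:ℝ)/2)) 3, ← Real.rpow_mul hx0.le]
  norm_num

lemma h5pow {x : ℝ} (hx0 : 0 < x) : x ^ (-(5:ℝ)/2) = (x ^ (-(1:ℝ)/2)) ^ (5:ℕ) := by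
  rw [← Real.rpow_natCast (x ^ (-(1:ℝ)/2)) 5, ← Real.rpow_mul hx0.le]
  norm_num

/-- first derivative of g -/
lemma hderiv1 {x : ℝ} (hx0 : 0 < x)
    (hC : Real.cos (x ^ (-(1:ℝ) / 2)) - 1 ≠ 0) :
    HasDerivAt (fun y : ℝ => 1 / (Real.cos (y ^ (-(1:ℝ) / 2)) - 1))
      (-(1:ℝ)/2 * x ^ (-(3:ℝ)/2) * Real.sin (x ^ (-(1:ℝ)/2))
        / (Real.cos (x ^ (-(1:ℝ)/2)) - 1) ^ 2) x := by
  have hu := hu_deriv hx0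
  have hCd : HasDerivAt (fun y : ℝ => Real.cos (y ^ (-(1:ℝ)/2)) - 1)
      (-Real.sin (x ^ (-(1:ℝ)/2)) * (-(1:ℝ)/2 * x ^ (-(3:ℝ)/2))) x :=
    (hu.cos).sub_const 1
  have h := hCd.inv hC
  have h2 : HasDerivAt (fun y : ℝ => (Real.cos (y ^ (-(1:ℝ)/2)) - 1)⁻¹)
      (-(1:ℝ)/2 * x ^ (-(3:ℝ)/2) * Real.sin (x ^ (-(1:ℝ)/2))
        / (Real.cos (x ^ (-(1:ℝ)/2)) - 1) ^ 2) x := by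
    refine h.congr_deriv ?_
    field_simp
  simpa [one_div] using h2

/-- second derivative of g -/
lemma hderiv2 {x : ℝ} (hx0 : 0 < x)
    (hC : Real.cos (x ^ (-(1:ℝ) / 2)) - 1 ≠ 0) :
    HasDerivAt (fun y : ℝ => -(1:ℝ)/2 * y ^ (-(3:ℝ)/2) * Real.sin (y ^ (-(1:ℝ)/2))
        / (Real.cos (y ^ (-(1:ℝ)/2)) - 1) ^ 2)
      ((x ^ (-(1:ℝ)/2)) ^ (5:ℕ) *
        (3 * Real.sin (x ^ (-(1:ℝ)/2)) - (x ^ (-(1:ℝ)/2)) * Real.cos (x ^ (-(1:ℝ)/2))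
          - 2 * (x ^ (-(1:ℝ)/2)))
        / (4 * (Real.cos (x ^ (-(1:ℝ)/2)) - 1) ^ 2)) x := by
  set w := x ^ (-(1:ℝ)/2) with hw
  have hu := hu_deriv hx0
  have hA := hA_deriv hx0
  have hS : HasDerivAt (fun y : ℝ => Real.sin (y ^ (-(1:ℝ)/2)))
      (Real.cos w * (-(1:ℝ)/2 * x ^ (-(3:ℝ)/2))) x :=
    hu.sin
  have hN : HasDerivAt (fun y : ℝ => -(1:ℝ)/2 * y ^ (-(3:ℝ)/2) * Real.sin (y ^ (-(1:ℝ)/2)))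
      ((-(1:ℝ)/2 * (-(3:ℝ)/2 * x ^ (-(5:ℝ)/2))) * Real.sin w
        + (-(1:ℝ)/2 * x ^ (-(3:ℝ)/2)) * (Real.cos w * (-(1:ℝ)/2 * x ^ (-(3:ℝ)/2)))) x :=
    (hA.const_mul (-(1:ℝ)/2)).mul hS
  have hCd : HasDerivAt (fun y : ℝ => Real.cos (y ^ (-(1:ℝ)/2)) - 1)
      (-Real.sin w * (-(1:ℝ)/2 * x ^ (-(3:ℝ)/2))) x :=
    (hu.cos).sub_const 1
  have hD := hCd.pow 2
  have h := hN.div hD (pow_ne_zero 2 hC)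
  refine h.congr_deriv ?_
  simp only [Pi.pow_apply]
  rw [h3pow hx0, h5pow hx0, ← hw]
  have hsq : Real.sin w ^ 2 = 1 - Real.cos w ^ 2 := Real.sin_sq w
  field_simp
  linear_combination (8 * w ^ 6 * (Real.cos w - 1)) * Real.sin_sq_add_cos_sq w

theorem stmt_3 :
    ConcaveOn ℝ (Set.Ioi ((π : ℝ) ^ 2)⁻¹)
      (fun x : ℝ => 1 / (Real.cos (x ^ (-(1 : ℝ) / 2)) - 1)) := by
  have hfacts : ∀ x ∈ Set.Ioi ((π : ℝ) ^ 2)⁻¹,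
      0 < x ∧ 0 < x ^ (-(1:ℝ)/2) ∧ x ^ (-(1:ℝ)/2) < π ∧
        Real.cos (x ^ (-(1:ℝ)/2)) - 1 < 0 := by
    intro x hx
    have hπ := Real.pi_pos
    have hx' : ((π : ℝ) ^ 2)⁻¹ < x := hx
    have hx0 : 0 < x := lt_trans (by positivity) hx'
    have hw0 : 0 < x ^ (-(1:ℝ)/2) := Real.rpow_pos_of_pos hx0 _
    have hw2 : (x ^ (-(1:ℝ)/2)) ^ (2:ℕ) = x⁻¹ := by
      rw [← Real.rpow_natCast (x ^ (-(1:ℝ)/2)) 2, ← Real.rpow_mul hx0.le]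
      norm_num
      exact (Real.rpow_neg_one x)
    have hxinv : x⁻¹ < π ^ 2 := by
      have h := inv_strictAnti₀ (by positivity : (0:ℝ) < ((π:ℝ)^2)⁻¹) hx'
      rwa [inv_inv] at h
    have hwπ : x ^ (-(1:ℝ)/2) < π := by
      apply lt_of_pow_lt_pow_left₀ 2 hπ.le
      rw [hw2]; exact hxinv
    have hcos : Real.cos (x ^ (-(1:ℝ)/2)) < 1 := by
      have := Real.cos_lt_cos_of_nonneg_of_le_pi (le_refl 0) hwπ.le hw0
      simpa using this
    exact ⟨hx0, hw0, hwπ, by linarith⟩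
  apply concaveOn_of_deriv2_nonpos (convex_Ioi _)
  · intro x hx
    obtain ⟨hx0, hw0, hwπ, hC⟩ := hfacts x hx
    exact ((hderiv1 hx0 hC.ne).differentiableAt.continuousAt).continuousWithinAt
  · rw [interior_Ioi]
    intro x hx
    obtain ⟨hx0, hw0, hwπ, hC⟩ := hfacts x hx
    exact (hderiv1 hx0 hC.ne).differentiableAt.differentiableWithinAt
  · rw [interior_Ioi]
    intro x hx
    obtain ⟨hx0, hw0, hwπ, hC⟩ := hfacts x hx
    have hev : deriv (fun x : ℝ => 1 / (Real.cos (x ^ (-(1 : ℝ) / 2)) - 1)) =ᶠ[nhds x]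
        (fun y : ℝ => -(1:ℝ)/2 * y ^ (-(3:ℝ)/2) * Real.sin (y ^ (-(1:ℝ)/2))
          / (Real.cos (y ^ (-(1:ℝ)/2)) - 1) ^ 2) := by
      filter_upwards [isOpen_Ioi.mem_nhds hx] with y hy
      obtain ⟨hy0, hyw0, hywπ, hyC⟩ := hfacts y hy
      exact (hderiv1 hy0 hyC.ne).deriv
    exact (((hderiv2 hx0 hC.ne).congr_of_eventuallyEq hev).differentiableAt).differentiableWithinAt
  · rw [interior_Ioi]
    intro x hx
    obtain ⟨hx0, hw0, hwπ, hC⟩ := hfacts x hx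
    have hev : deriv (fun x : ℝ => 1 / (Real.cos (x ^ (-(1 : ℝ) / 2)) - 1)) =ᶠ[nhds x]
        (fun y : ℝ => -(1:ℝ)/2 * y ^ (-(3:ℝ)/2) * Real.sin (y ^ (-(1:ℝ)/2))
          / (Real.cos (y ^ (-(1:ℝ)/2)) - 1) ^ 2) := by
      filter_upwards [isOpen_Ioi.mem_nhds hx] with y hy
      obtain ⟨hy0, hyw0, hywπ, hyC⟩ := hfacts y hy
      exact (hderiv1 hy0 hyC.ne).deriv
    have h2 := ((hderiv2 hx0 hC.ne).congr_of_eventuallyEq hev).deriv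
    show deriv (deriv (fun x : ℝ => 1 / (Real.cos (x ^ (-(1 : ℝ) / 2)) - 1))) x ≤ 0
    rw [h2]
    have hkey := aux3 (x ^ (-(1:ℝ)/2)) hw0.le hwπ.le
    apply div_nonpos_of_nonpos_of_nonneg
    · have h5 : (0:ℝ) ≤ (x ^ (-(1:ℝ)/2)) ^ (5:ℕ) := by positivity
      nlinarith
    · positivity
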